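/- For coprime integers 0 < a < q, the fraction a/q belongs to the SL(2,ℕ)-saturated Farey set 𝔖𝔉_Q (i.e., there exists a matrix (a' b'; c' d') in SL(2,ℤ) with positive entries, a' ≥ max{b', c'}, b' ≥ d', c' ≥ d', trace a' + d' ≤ Q, and d'/b' = a/q) if and only if q + a + ā ≤ Q, where ā is the multiplicative inverse of a mod q in [1, q). -/
import Mathlib


theorem stmt_7 (Q a q ab : ℤ)
    (ha : 0 < a) (haq : a < q) (hgcd : Int.gcd a q = 1)
    (hi1 : 1 ≤ ab) (hi2 : ab < q) (hinv : a * ab ≡ 1 [ZMOD q]) :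
    (∃ a' b' c' d' : ℤ,
      a' * d' - b' * c' = 1 ∧
      0 < a' ∧ 0 < b' ∧ 0 < c' ∧ 0 < d' ∧
      b' ≤ a' ∧ c' ≤ a' ∧ d' ≤ b' ∧ d' ≤ c' ∧
      a' + d' ≤ Q ∧ d' * q = a * b') ↔ q + a + ab ≤ Q := by
  have hq0 : 0 < q := lt_trans ha haq
  have hdvd : q ∣ a * ab - 1 := by
    have h := Int.ModEq.dvd hinv
    exact dvd_sub_comm.mp h
  obtain ⟨m, hm⟩ := hdvd
  have hm0 : 0 ≤ m := by nlinarith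
  have hmab : m < ab := by nlinarith
  constructor
  · rintro ⟨a', b', c', d', hdet, ha', hb', hc', hd', hba, hca, hdb, hdc, htr, heq⟩
    -- q ∣ b'
    have hcop : IsCoprime a q := Int.isCoprime_iff_gcd_eq_one.mpr hgcd
    have hqb : q ∣ b' := by
      have : q ∣ a * b' := ⟨d', by linarith⟩
      exact (hcop.symm.dvd_of_dvd_mul_left this)
    obtain ⟨k, hk⟩ := hqb
    have hk1 : 1 ≤ k := by nlinarith
    have hd'ak : d' = a * k := by
      have : d' * q = a * k * q := by rw [heq, hk]; ring
      exact mul_right_cancel₀ (ne_of_gt hq0) this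
    have hkey : k * (a' * a - q * c') = 1 := by
      rw [hd'ak, hk] at hdet; linarith [hdet]; 
    have hkdvd : k ∣ 1 := ⟨a' * a - q * c', hkey.symm⟩
    have hk' : k = 1 := by
      have := Int.le_of_dvd one_pos hkdvd
      omega
    subst hk'
    rw [mul_one] at hk hd'ak
    rw [one_mul] at hkey
    have hdvd2 : q ∣ a' - ab := ⟨c' * ab - m * a', by nlinarith⟩
    have hpos : 0 < a' - ab := by omega
    have := Int.le_of_dvd hpos hdvd2
    omega
  · intro hQ
    refine ⟨q + ab, q, a + m, a, ?_, by linarith, hq0, by linarith, ha,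
      by linarith, by nlinarith, le_of_lt haq, by linarith, by linarith, by ring⟩
    nlinarith
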